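/- Let q be a real number with q > 0 and q ≠ 1, and let r ≥ 0 be an integer. Then for every integer n ≥ 2, q^r · Σ_{k=0}^{n} binom(n,k) · q^k · β_k^{(r)} = β_n^{(r)}. -/

import Mathlib

open Finset

/-- The q-bracket: `[x] = (q^x - 1)/(q - 1)`. -/
noncomputable def qb (q x : ℝ) : ℝ := (q ^ x - 1) / (q - 1)

/-- The extended Carlitz q-Bernoulli numbers of order `r`, with the convention
`(k+r)/[k+r] = 1` when `k + r = 0`. -/
noncomputable def extBetaNum (q : ℝ) (r n : ℕ) : ℝ :=
  ((q - 1) ^ n)⁻¹ *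
    ∑ k ∈ range (n + 1),
      (-1 : ℝ) ^ (n - k) * (n.choose k : ℝ) *
        (if k + r = 0 then 1 else ((k + r : ℕ) : ℝ) / qb q ((k + r : ℕ) : ℝ))

private lemma qpow_ne_one {q : ℝ} (hq : 0 < q) (hq1 : q ≠ 1) {m : ℕ} (hm : m ≠ 0) :
    q ^ m ≠ 1 := by
  rcases lt_or_gt_of_ne hq1 with h | h
  · exact ne_of_lt (pow_lt_one₀ hq.le h hm)
  · exact ne_of_gt (one_lt_pow₀ h hm)

private lemma Fkey {q : ℝ} (hq : 0 < q) (hq1 : q ≠ 1) (r j : ℕ) :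
    q ^ (j + r) * (if j + r = 0 then (1:ℝ) else ((j + r : ℕ) : ℝ) / qb q ((j + r : ℕ) : ℝ))
      = (if j + r = 0 then (1:ℝ) else ((j + r : ℕ) : ℝ) / qb q ((j + r : ℕ) : ℝ))
        + ((j + r : ℕ) : ℝ) * (q - 1) := by
  rcases Nat.eq_zero_or_pos (j + r) with h | h
  · simp [h]
  · have hne : j + r ≠ 0 := h.ne'
    simp only [if_neg hne]
    have hqb : qb q ((j + r : ℕ) : ℝ) = (q ^ (j + r) - 1) / (q - 1) := by
      rw [qb, Real.rpow_natCast]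
    have h1 : q ^ (j + r) - 1 ≠ 0 := sub_ne_zero.mpr (qpow_ne_one hq hq1 hne)
    have h2 : q - 1 ≠ 0 := sub_ne_zero.mpr hq1
    rw [hqb]
    field_simp
    ring

private lemma altsum0 : ∀ N : ℕ, N ≠ 0 →
    ∑ j ∈ range (N + 1), (-1:ℝ) ^ j * (N.choose j : ℝ) = 0 := by
  intro N hN
  have h := add_pow (-1 : ℝ) 1 N
  simp only [neg_add_cancel, one_pow, mul_one, zero_pow hN] at h
  exact h.symm

private lemma altsum1 {n : ℕ} (hn : 2 ≤ n) :
    ∑ j ∈ range (n + 1), (-1:ℝ) ^ j * (n.choose j : ℝ) * (j : ℝ) = 0 := by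
  rw [Finset.sum_range_succ']
  push_cast
  simp only [mul_zero, add_zero]
  have hkey : ∀ i : ℕ, (n.choose (i+1) : ℝ) * ((i:ℝ) + 1) = (n : ℝ) * ((n-1).choose i : ℝ) := by
    intro i
    have h := Nat.add_one_mul_choose_eq (n - 1) i
    have h1 : n - 1 + 1 = n := by omega
    simp only [Nat.succ_eq_add_one, h1] at h
    have := congrArg (Nat.cast (R := ℝ)) h
    push_cast at this
    linarith [this]
  have hn1 : n = (n - 1) + 1 := by omega
  calc ∑ i ∈ range n, (-1:ℝ) ^ (i+1) * (n.choose (i+1) : ℝ) * ((i:ℝ) + 1)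
      = ∑ i ∈ range n, (-(n:ℝ)) * ((-1:ℝ) ^ i * ((n-1).choose i : ℝ)) := by
        apply Finset.sum_congr rfl
        intro i _
        rw [mul_assoc, hkey i, pow_succ]
        ring
    _ = (-(n:ℝ)) * ∑ i ∈ range ((n-1)+1), (-1:ℝ) ^ i * ((n-1).choose i : ℝ) := by
        rw [← Finset.mul_sum, ← hn1]
    _ = 0 := by rw [altsum0 (n-1) (by omega), mul_zero]

theorem extended_beta_symbolic_formula (q : ℝ) (hq : 0 < q) (hq1 : q ≠ 1) (r : ℕ) :
    ∀ n : ℕ, 2 ≤ n →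
      q ^ r * ∑ k ∈ range (n + 1), (n.choose k : ℝ) * q ^ k * extBetaNum q r k
        = extBetaNum q r n := by
  intro n hn
  have hd : q - 1 ≠ 0 := sub_ne_zero.mpr hq1
  set F : ℕ → ℝ :=
    fun j => if j + r = 0 then (1:ℝ) else ((j + r : ℕ) : ℝ) / qb q ((j + r : ℕ) : ℝ) with hF
  have hbeta : ∀ m : ℕ, extBetaNum q r m
      = ((q-1)^m)⁻¹ * ∑ j ∈ range (m+1), (-1:ℝ)^(m-j) * (m.choose j : ℝ) * F j := fun m => rfl
  -- the inner-sum evaluation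
  have hinner : ∀ j ∈ range (n+1), ∑ k ∈ range (n+1),
      (n.choose k : ℝ) * q^k * ((q-1)^k)⁻¹ * ((-1:ℝ)^(k-j) * (k.choose j : ℝ))
      = (n.choose j : ℝ) * q^j * (-1:ℝ)^(n-j) * ((q-1)^n)⁻¹ := by
    intro j hj
    rw [mem_range] at hj
    have hjn : j ≤ n := by omega
    have hsub : Finset.Ico j (n+1) ⊆ range (n+1) := by
      intro x hx
      rw [Finset.mem_Ico] at hx
      rw [mem_range]
      omega
    rw [← Finset.sum_subset hsub]
    · rw [Finset.sum_Ico_eq_sum_range]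
      have hN : n + 1 - j = (n - j) + 1 := by omega
      rw [hN]
      have hterm : ∀ m ∈ range ((n-j)+1),
          (n.choose (j+m) : ℝ) * q^(j+m) * ((q-1)^(j+m))⁻¹ *
            ((-1:ℝ)^((j+m)-j) * ((j+m).choose j : ℝ))
          = ((n.choose j : ℝ) * q^j * ((q-1)^j)⁻¹) *
            (((n-j).choose m : ℝ) * (-q/(q-1))^m) := by
        intro m hm
        rw [mem_range] at hm
        have hmn : j + m ≤ n := by omega
        have hch : (n.choose (j+m) : ℝ) * ((j+m).choose j : ℝ)
            = (n.choose j : ℝ) * ((n-j).choose m : ℝ) := by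
          have := Nat.choose_mul (n := n) (Nat.le_add_right j m)
          have h2 : j + m - j = m := by omega
          rw [h2] at this
          exact_mod_cast congrArg (Nat.cast (R := ℝ)) this
        have hjj : (j + m) - j = m := by omega
        have h2 : (-q/(q-1))^m = (-1:ℝ)^m * (q^m * ((q-1)^m)⁻¹) := by
          rw [div_pow, neg_pow]
          ring
        rw [hjj, pow_add, pow_add, mul_inv, h2]
        linear_combination (q^j * q^m * ((q-1)^j)⁻¹ * ((q-1)^m)⁻¹ * (-1:ℝ)^m) * hch
      rw [Finset.sum_congr rfl hterm, ← Finset.mul_sum]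
      have hbin : ∑ m ∈ range ((n-j)+1), ((n-j).choose m : ℝ) * (-q/(q-1))^m
          = (-1:ℝ)^(n-j) * ((q-1)^(n-j))⁻¹ := by
        have h := add_pow (-q/(q-1)) 1 (n-j)
        simp only [one_pow, mul_one] at h
        have hx : -q/(q-1) + 1 = -1/(q-1) := by
          field_simp
          ring
        rw [hx] at h
        calc ∑ m ∈ range ((n-j)+1), ((n-j).choose m : ℝ) * (-q/(q-1))^m
            = ∑ m ∈ range ((n-j)+1), (-q/(q-1))^m * ((n-j).choose m : ℝ) := by
              apply Finset.sum_congr rfl; intro m _; ring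
          _ = (-1/(q-1))^(n-j) := h.symm
          _ = (-1:ℝ)^(n-j) * ((q-1)^(n-j))⁻¹ := by
              rw [div_pow, neg_pow, one_pow]
              field_simp
      rw [hbin]
      have hpow : ((q-1)^j)⁻¹ * ((q-1)^(n-j))⁻¹ = ((q-1)^n)⁻¹ := by
        have hjn2 : j + (n - j) = n := by omega
        rw [← mul_inv, ← pow_add, hjn2]
      rw [← hpow]
      ring
    · intro k hk hk2
      have : k < j := by
        rw [mem_range] at hk
        rw [Finset.mem_Ico] at hk2
        omega
      rw [Nat.choose_eq_zero_of_lt this]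
      simp
  -- main computation
  have step1 : q ^ r * ∑ k ∈ range (n + 1), (n.choose k : ℝ) * q ^ k * extBetaNum q r k
      = q ^ r * ∑ j ∈ range (n+1), F j * ((n.choose j : ℝ) * q^j * (-1:ℝ)^(n-j) * ((q-1)^n)⁻¹) := by
    congr 1
    calc ∑ k ∈ range (n + 1), (n.choose k : ℝ) * q ^ k * extBetaNum q r k
        = ∑ k ∈ range (n+1), ∑ j ∈ range (n+1),
            (n.choose k : ℝ) * q^k * ((q-1)^k)⁻¹ * ((-1:ℝ)^(k-j) * (k.choose j : ℝ)) * F j := by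
          apply Finset.sum_congr rfl
          intro k hk
          rw [mem_range] at hk
          rw [hbeta k]
          rw [← Finset.sum_subset (Finset.range_subset_range.mpr (by omega) :
              range (k+1) ⊆ range (n+1))]
          · rw [Finset.mul_sum, Finset.mul_sum]
            apply Finset.sum_congr rfl
            intro j _
            ring
          · intro j hj hj2
            have : k < j := by
              simp only [mem_range] at hj hj2
              omega
            rw [Nat.choose_eq_zero_of_lt this]
            simp
      _ = ∑ j ∈ range (n+1), ∑ k ∈ range (n+1),
            (n.choose k : ℝ) * q^k * ((q-1)^k)⁻¹ * ((-1:ℝ)^(k-j) * (k.choose j : ℝ)) * F j := by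
          rw [Finset.sum_comm]
      _ = ∑ j ∈ range (n+1), F j * ((n.choose j : ℝ) * q^j * (-1:ℝ)^(n-j) * ((q-1)^n)⁻¹) := by
          apply Finset.sum_congr rfl
          intro j hj
          rw [← hinner j hj, Finset.mul_sum]
          apply Finset.sum_congr rfl
          intro k _
          ring
  rw [step1, hbeta n]
  rw [Finset.mul_sum, Finset.mul_sum]
  have step2 : ∀ j ∈ range (n+1),
      q ^ r * (F j * ((n.choose j : ℝ) * q^j * (-1:ℝ)^(n-j) * ((q-1)^n)⁻¹))
      = ((q-1)^n)⁻¹ * ((-1:ℝ)^(n-j) * (n.choose j : ℝ) * F j)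
        + ((q-1)^n)⁻¹ * ((-1:ℝ)^(n-j) * (n.choose j : ℝ) * (((j + r : ℕ) : ℝ) * (q-1))) := by
    intro j hj
    have hk : q ^ (j + r) * F j = F j + ((j + r : ℕ) : ℝ) * (q - 1) := Fkey hq hq1 r j
    calc q ^ r * (F j * ((n.choose j : ℝ) * q^j * (-1:ℝ)^(n-j) * ((q-1)^n)⁻¹))
        = (q^(j+r) * F j) * ((n.choose j : ℝ) * (-1:ℝ)^(n-j) * ((q-1)^n)⁻¹) := by
          rw [pow_add]; ring
      _ = (F j + ((j + r : ℕ) : ℝ) * (q-1)) * ((n.choose j : ℝ) * (-1:ℝ)^(n-j) * ((q-1)^n)⁻¹) := by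
          rw [hk]
      _ = _ := by ring
  rw [Finset.sum_congr rfl step2, Finset.sum_add_distrib]
  have hvan : ∑ j ∈ range (n+1),
      ((q-1)^n)⁻¹ * ((-1:ℝ)^(n-j) * (n.choose j : ℝ) * (((j + r : ℕ) : ℝ) * (q-1))) = 0 := by
    have hsign : ∀ j ∈ range (n+1), (-1:ℝ)^(n-j) = (-1:ℝ)^n * (-1:ℝ)^j := by
      intro j hj
      rw [mem_range] at hj
      have h1 : n + j = (n - j) + 2*j := by omega
      have : (-1:ℝ)^(n+j) = (-1:ℝ)^(n-j) := by
        rw [h1, pow_add, pow_mul, neg_one_sq, one_pow, mul_one]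
      rw [← pow_add]
      exact this.symm
    calc ∑ j ∈ range (n+1),
        ((q-1)^n)⁻¹ * ((-1:ℝ)^(n-j) * (n.choose j : ℝ) * (((j + r : ℕ) : ℝ) * (q-1)))
        = (((q-1)^n)⁻¹ * (q-1) * (-1:ℝ)^n) *
          ∑ j ∈ range (n+1), ((-1:ℝ)^j * (n.choose j : ℝ) * (j:ℝ)
            + (r:ℝ) * ((-1:ℝ)^j * (n.choose j : ℝ))) := by
          rw [Finset.mul_sum]
          apply Finset.sum_congr rfl
          intro j hj
          rw [hsign j hj]
          push_cast
          ring
      _ = 0 := by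
          rw [Finset.sum_add_distrib, ← Finset.mul_sum, altsum1 hn,
            altsum0 n (by omega), mul_zero, add_zero, mul_zero]
  rw [hvan, add_zero]
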